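/- Let u ∈ S_n. For any 1 ≤ i < j ≤ n, the standardization of the restriction of the RSK insertion tableau P(u) to the values [i,j] (via jeu de taquin) equals the insertion tableau of the standardized subword st(u_{[i,j]}). -/

import Mathlib

/-- `u` is the one-line word of a permutation of `{1, …, n}`. -/
def IsPermWord (n : ℕ) (u : List ℕ) : Prop := u.Perm (List.range' 1 n)

/-- The left inversion set of a word `u`. -/
def InvW (u : List ℕ) : Set (ℕ × ℕ) :=
  {p | p.1 < p.2 ∧ p.1 ∈ u ∧ p.2 ∈ u ∧ u.idxOf p.2 < u.idxOf p.1}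

/-- Schensted row insertion of `x` into a row: returns the new row together with the
bumped entry (if any). -/
def rowInsert : List ℕ → ℕ → List ℕ × Option ℕ
  | [], x => ([x], none)
  | a :: r, x =>
    if a ≤ x then
      let p := rowInsert r x
      (a :: p.1, p.2)
    else (x :: r, some a)

/-- Schensted insertion of `x` into a tableau (a list of rows). -/
def tabInsert : List (List ℕ) → ℕ → List (List ℕ)
  | [], x => [[x]]
  | row :: rest, x =>
    match rowInsert row x with
    | (row', none) => row' :: rest
    | (row', some b) => row' :: tabInsert rest b

/-- The RSK insertion tableau `P(w)` of a word `w`. -/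
def RSKP (w : List ℕ) : List (List ℕ) := w.foldl tabInsert []

/-- The shape of a tableau: the list of its row lengths. -/
def shape (T : List (List ℕ)) : List ℕ := T.map List.length

/-- `T` is a standard Young tableau with `n` cells: its entries are exactly `1, …, n`,
its rows are nonempty and strictly increasing, and its columns are strictly increasing
(in particular row lengths weakly decrease). -/
def IsSYT (n : ℕ) (T : List (List ℕ)) : Prop :=
  T.flatten.Perm (List.range' 1 n) ∧
  (∀ r ∈ T, r ≠ [] ∧ List.Chain' (· < ·) r) ∧
  List.Chain' (fun r₁ r₂ => r₂.length ≤ r₁.length ∧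
    ∀ c, c < r₂.length → r₁.getD c 0 < r₂.getD c 0) T

/-- The (skew) restriction of a tableau to the entries lying in the segment `[i, j]`. -/
def restrictTab (T : List (List ℕ)) (i j : ℕ) : List (List ℕ) :=
  T.map (List.filter (fun v => decide (i ≤ v ∧ v ≤ j)))

/-- The row reading word of a (skew) tableau: rows read left to right,
from the bottom row up. -/
def readWord (T : List (List ℕ)) : List ℕ := T.reverse.flatten

/-- The standardization `st(T_{[i,j]})` of the restriction of `T` to the segment `[i, j]`:
lower all entries by `i - 1` and rectify to straight shape by jeu de taquin; rectification
is computed as the RSK insertion tableau of the row reading word, which agrees with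
jeu de taquin rectification. -/
def stTab (T : List (List ℕ)) (i j : ℕ) : List (List ℕ) :=
  RSKP ((readWord (restrictTab T i j)).map (fun v => v - (i - 1)))

@[simp] lemma rowInsert_nil (x : ℕ) : rowInsert [] x = ([x], none) := rfl

lemma rowInsert_cons (a : ℕ) (r : List ℕ) (x : ℕ) :
    rowInsert (a :: r) x =
      if a ≤ x then (a :: (rowInsert r x).1, (rowInsert r x).2) else (x :: r, some a) := rfl

lemma rowInsert_cons_le {a x : ℕ} (h : a ≤ x) (r : List ℕ) :
    rowInsert (a :: r) x = (a :: (rowInsert r x).1, (rowInsert r x).2) := by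
  rw [rowInsert_cons, if_pos h]

lemma rowInsert_cons_gt {a x : ℕ} (h : x < a) (r : List ℕ) :
    rowInsert (a :: r) x = (x :: r, some a) := by
  rw [rowInsert_cons, if_neg (by omega)]

@[simp] lemma tabInsert_nil (x : ℕ) : tabInsert [] x = [[x]] := rfl

lemma tabInsert_cons (R : List ℕ) (rest : List (List ℕ)) (x : ℕ) :
    tabInsert (R :: rest) x =
      (rowInsert R x).1 ::
        (match (rowInsert R x).2 with
          | none => rest
          | some b => tabInsert rest b) := by
  show (match rowInsert R x with
    | (row', none) => row' :: rest
    | (row', some b) => row' :: tabInsert rest b) = _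
  rcases h : rowInsert R x with ⟨R', b⟩
  cases b <;> simp

lemma rowInsert_fst_ne_nil (R : List ℕ) (x : ℕ) : (rowInsert R x).1 ≠ [] := by
  cases R with
  | nil => simp
  | cons a r =>
    rw [rowInsert_cons]
    split <;> simp

lemma rowInsert_bump_gt {R S : List ℕ} {x b : ℕ} (h : rowInsert R x = (S, some b)) : x < b := by
  induction R generalizing S with
  | nil => simp at h
  | cons a r ih =>
    rw [rowInsert_cons] at h
    split at h
    · rcases hr : rowInsert r x with ⟨S', b'⟩
      rw [hr] at h
      simp only [Prod.mk.injEq] at h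
      exact ih (by rw [hr, h.2])
    · simp only [Prod.mk.injEq, Option.some.injEq] at h
      omega

lemma rowInsert_snd_none_iff {R : List ℕ} {x : ℕ} :
    (rowInsert R x).2 = none ↔ ∀ a ∈ R, a ≤ x := by
  induction R with
  | nil => simp
  | cons a r ih =>
    rw [rowInsert_cons]
    split
    · simpa [*] using ih
    · rename_i ha
      simp only [List.mem_cons]
      constructor
      · intro h; simp at h
      · intro h; exact absurd (h a (Or.inl rfl)) (by omega)

lemma rowInsert_fst_of_none {R : List ℕ} {x : ℕ} (h : (rowInsert R x).2 = none) :
    (rowInsert R x).1 = R ++ [x] := by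
  induction R with
  | nil => simp
  | cons a r ih =>
    rw [rowInsert_cons] at h ⊢
    split at h
    · simp only at h
      rw [if_pos (by assumption)]
      simp [ih h]
    · simp at h

lemma rowInsert_mem_fst {R : List ℕ} {x c : ℕ} (h : c ∈ (rowInsert R x).1) :
    c ∈ R ∨ c = x := by
  induction R with
  | nil => simp at h; tauto
  | cons a r ih =>
    rw [rowInsert_cons] at h
    split at h
    · rcases List.mem_cons.mp h with h | h
      · exact Or.inl (by simp [h])
      · rcases ih h with h | h
        · exact Or.inl (by simp [h])
        · exact Or.inr h
    · rcases List.mem_cons.mp h with h | h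
      · exact Or.inr h
      · exact Or.inl (by simp [h])

lemma rowInsert_mem_x {R S : List ℕ} {x b : ℕ} (h : rowInsert R x = (S, some b)) : x ∈ S := by
  induction R generalizing S with
  | nil => simp at h
  | cons a r ih =>
    rw [rowInsert_cons] at h
    split at h
    · rcases hr : rowInsert r x with ⟨S', b'⟩
      rw [hr] at h
      simp only [Prod.mk.injEq] at h
      rcases h with ⟨h1, h2⟩
      cases b' with
      | none => simp at h2
      | some c =>
        simp only [Option.some.injEq] at h2
        subst h2
        have := ih hr
        rw [← h1]; simp [this]
    · simp only [Prod.mk.injEq] at h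
      rw [← h.1]; simp

/-- head of result is ≤ x when a bump occurs. -/
lemma rowInsert_head_le {R S : List ℕ} {x b : ℕ} (h : rowInsert R x = (S, some b)) :
    ∃ h' t, S = h' :: t ∧ h' ≤ x := by
  cases R with
  | nil => simp at h
  | cons a r =>
    rw [rowInsert_cons] at h
    split at h
    · rename_i ha
      rcases hr : rowInsert r x with ⟨S', b'⟩
      rw [hr] at h
      simp only [Prod.mk.injEq] at h
      exact ⟨a, S', h.1.symm, ha⟩
    · simp only [Prod.mk.injEq] at h
      exact ⟨x, r, h.1.symm, le_refl x⟩

lemma chain'_le_of_mem {a : ℕ} {l : List ℕ} (h : List.Chain' (· ≤ ·) (a :: l)) {c : ℕ}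
    (hc : c ∈ l) : a ≤ c := by
  induction l generalizing a with
  | nil => simp at hc
  | cons d l ih =>
    have h1 : a ≤ d := (List.isChain_cons_cons.mp h).1
    rcases List.mem_cons.mp hc with h' | h'
    · omega
    · exact le_trans h1 (ih (List.isChain_cons_cons.mp h).2 h')

lemma rowInsert_chain {R : List ℕ} (hR : List.Chain' (· ≤ ·) R) (x : ℕ) :
    List.Chain' (· ≤ ·) (rowInsert R x).1 := by
  induction R with
  | nil => exact List.isChain_singleton x
  | cons a r ih =>
    rw [rowInsert_cons]
    split
    · rename_i ha
      simp only
      have hr := (List.isChain_cons.mp hR).2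
      refine List.isChain_cons.mpr ?_
      refine ⟨?_, ih hr⟩
      intro y hy
      rcases rowInsert_mem_fst (List.mem_of_mem_head? hy) with h | h
      · exact chain'_le_of_mem hR h
      · omega
    · rename_i ha
      simp only
      refine List.isChain_cons.mpr ?_
      refine ⟨?_, (List.isChain_cons.mp hR).2⟩
      intro y hy
      cases r with
      | nil => simp at hy
      | cons d t =>
        simp only [List.head?_cons, Option.mem_def, Option.some.injEq] at hy
        have h1 : a ≤ d := (List.isChain_cons_cons.mp hR).1
        omega

/-- The bumped-out entry is an entry of the original row. -/
lemma rowInsert_bump_mem {R S : List ℕ} {x b : ℕ} (h : rowInsert R x = (S, some b)) :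
    b ∈ R := by
  induction R generalizing S with
  | nil => simp at h
  | cons a r ih =>
    rw [rowInsert_cons] at h
    split at h
    · rcases hr : rowInsert r x with ⟨S1, b1⟩
      rw [hr] at h
      simp only [Prod.mk.injEq] at h
      cases b1 with
      | none => simp at h
      | some c1 =>
        have : c1 = b := by simpa using h.2
        subst this
        exact List.mem_cons.mpr (Or.inr (ih hr))
    · simp only [Prod.mk.injEq, Option.some.injEq] at h
      exact List.mem_cons.mpr (Or.inl h.2.symm)

/-- Inserting `y` then `z` (with `y ≤ z`): the second bump is ≥ the first. -/
lemma bump_mono {R S S' : List ℕ} {x y cy c : ℕ} (hR : List.Chain' (· ≤ ·) R)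
    (hyz : x ≤ y) (h1 : rowInsert R x = (S, some cy)) (h2 : rowInsert S y = (S', some c)) :
    cy ≤ c := by
  induction R generalizing S S' with
  | nil => simp at h1
  | cons a r ih =>
    rw [rowInsert_cons] at h1
    split at h1
    · rename_i ha
      rcases hr : rowInsert r x with ⟨S1, b1⟩
      rw [hr] at h1
      simp only [Prod.mk.injEq] at h1
      rcases h1 with ⟨h1a, h1b⟩
      cases b1 with
      | none => simp at h1b
      | some c1 =>
        simp only [Option.some.injEq] at h1b; subst h1b
        subst h1a
        rw [rowInsert_cons_le (le_trans ha hyz)] at h2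
        rcases hs : rowInsert S1 y with ⟨S2, b2⟩
        rw [hs] at h2
        simp only [Prod.mk.injEq] at h2
        cases b2 with
        | none => simp at h2
        | some c2 =>
          have hc2 : c2 = c := by simpa using h2.2
          rw [hc2] at hs
          exact ih (List.isChain_cons.mp hR).2 hr hs
    · simp only [Prod.mk.injEq, Option.some.injEq] at h1
      rcases h1 with ⟨h1a, h1b⟩
      subst h1a h1b
      rw [rowInsert_cons_le hyz] at h2
      rcases hs : rowInsert r y with ⟨S2, b2⟩
      rw [hs] at h2
      simp only [Prod.mk.injEq] at h2
      cases b2 with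
      | none => simp at h2
      | some c2 =>
        have hc : c2 = c := by simpa using h2.2
        rw [hc] at hs
        exact chain'_le_of_mem hR (rowInsert_bump_mem hs)

/-- Inserting `z` then `y` with `y < z`: the second bump is < the first. -/
lemma bump_anti {R S S' : List ℕ} {y z c d : ℕ} (hR : List.Chain' (· ≤ ·) R)
    (hyz : y < z) (h1 : rowInsert R z = (S, some c)) (h2 : rowInsert S y = (S', some d)) :
    d < c := by
  induction R generalizing S S' with
  | nil => simp at h1
  | cons a r ih =>
    rw [rowInsert_cons] at h1
    split at h1
    · rename_i ha
      rcases hr : rowInsert r z with ⟨S1, b1⟩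
      rw [hr] at h1
      simp only [Prod.mk.injEq] at h1
      cases b1 with
      | none => simp at h1
      | some c1 =>
        have hc : c1 = c := by simpa using h1.2
        rw [hc] at hr
        have hS : S = a :: S1 := h1.1.symm
        subst hS
        rw [rowInsert_cons] at h2
        split at h2
        · rcases hs : rowInsert S1 y with ⟨S2, b2⟩
          rw [hs] at h2
          simp only [Prod.mk.injEq] at h2
          cases b2 with
          | none => simp at h2
          | some c2 =>
            have hd2 : c2 = d := by simpa using h2.2
            rw [hd2] at hs
            exact ih (List.isChain_cons.mp hR).2 hr hs
        · simp only [Prod.mk.injEq, Option.some.injEq] at h2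
          have hda : a = d := h2.2
          have hcz : z < c := rowInsert_bump_gt hr
          omega
    · -- a > z, so c = a, S = z :: r; then y bumps z at the head
      rename_i ha
      simp only [Prod.mk.injEq, Option.some.injEq] at h1
      rcases h1 with ⟨h1a, h1b⟩
      rw [← h1a, rowInsert_cons_gt hyz] at h2
      simp only [Prod.mk.injEq, Option.some.injEq] at h2
      omega

/-- Sequentially row-insert a list of values into a row; collect the bumped values. -/
def rowSeq : List ℕ → List ℕ → List ℕ × List ℕ
  | R, [] => (R, [])
  | R, a :: as =>
    let p := rowInsert R a
    let q := rowSeq p.1 as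
    (q.1, p.2.toList ++ q.2)

@[simp] lemma rowSeq_nil (R : List ℕ) : rowSeq R [] = (R, []) := rfl

lemma rowSeq_cons (R : List ℕ) (a : ℕ) (as : List ℕ) :
    rowSeq R (a :: as) =
      ((rowSeq (rowInsert R a).1 as).1,
        (rowInsert R a).2.toList ++ (rowSeq (rowInsert R a).1 as).2) := rfl

lemma foldl_tabInsert_cons (R : List ℕ) (rest : List (List ℕ)) (ws : List ℕ) :
    List.foldl tabInsert (R :: rest) ws =
      (rowSeq R ws).1 :: List.foldl tabInsert rest (rowSeq R ws).2 := by
  induction ws generalizing R rest with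
  | nil => simp
  | cons a as ih =>
    rw [List.foldl_cons, rowSeq_cons, tabInsert_cons]
    rcases h : (rowInsert R a).2 with _ | b
    · simpa using ih (rowInsert R a).1 rest
    · simp only [Option.toList_some, List.singleton_append, List.foldl_cons]
      exact ih (rowInsert R a).1 (tabInsert rest b)

/-- Elementary Knuth relations on three-letter words. -/
inductive KT : List ℕ → List ℕ → Prop
  | p1 (x y z : ℕ) : x < y → y ≤ z → KT [y, x, z] [y, z, x]
  | p2 (x y z : ℕ) : x ≤ y → y < z → KT [x, z, y] [z, x, y]

def KTS (a b : List ℕ) : Prop := KT a b ∨ KT b a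

lemma KTS.symm {a b : List ℕ} (h : KTS a b) : KTS b a := h.elim Or.inr Or.inl

/-- One Knuth step anywhere inside a word. -/
def KStep (w w' : List ℕ) : Prop :=
  ∃ u v a b, w = u ++ a ++ v ∧ w' = u ++ b ++ v ∧ KTS a b

lemma KStep.symm {w w' : List ℕ} (h : KStep w w') : KStep w' w := by
  obtain ⟨u, v, a, b, h1, h2, h3⟩ := h
  exact ⟨u, v, b, a, h2, h1, h3.symm⟩

/-- Knuth equivalence. -/
def Knuth : List ℕ → List ℕ → Prop := Relation.ReflTransGen KStep

lemma Knuth.refl (w : List ℕ) : Knuth w w := Relation.ReflTransGen.refl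

lemma Knuth.trans {a b c : List ℕ} (h1 : Knuth a b) (h2 : Knuth b c) : Knuth a c :=
  Relation.ReflTransGen.trans h1 h2

lemma Knuth.symm {a b : List ℕ} (h : Knuth a b) : Knuth b a := by
  induction h with
  | refl => exact Knuth.refl _
  | tail _ h2 ih => exact Knuth.trans (Relation.ReflTransGen.single h2.symm) ih

lemma Knuth.single {a b : List ℕ} (h : KStep a b) : Knuth a b := Relation.ReflTransGen.single h

lemma KStep.congr {a b : List ℕ} (l r : List ℕ) (h : KStep a b) :
    KStep (l ++ a ++ r) (l ++ b ++ r) := by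
  obtain ⟨u, v, p, q, h1, h2, h3⟩ := h
  exact ⟨l ++ u, v ++ r, p, q, by simp [h1], by simp [h2], h3⟩

lemma Knuth.congr {a b : List ℕ} (l r : List ℕ) (h : Knuth a b) :
    Knuth (l ++ a ++ r) (l ++ b ++ r) := by
  induction h with
  | refl => exact Knuth.refl _
  | tail _ h2 ih => exact Knuth.trans ih (Knuth.single (h2.congr l r))

lemma Knuth.congr_right {a b : List ℕ} (r : List ℕ) (h : Knuth a b) :
    Knuth (a ++ r) (b ++ r) := by
  simpa using h.congr [] r

lemma Knuth.congr_left {a b : List ℕ} (l : List ℕ) (h : Knuth a b) :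
    Knuth (l ++ a) (l ++ b) := by
  simpa using h.congr l []

lemma rowSeq_strip {a : ℕ} {ws : List ℕ} (h : ∀ c ∈ ws, a ≤ c) (R : List ℕ) :
    rowSeq (a :: R) ws = (a :: (rowSeq R ws).1, (rowSeq R ws).2) := by
  induction ws generalizing R with
  | nil => simp
  | cons c cs ih =>
    rw [rowSeq_cons, rowInsert_cons_le (h c (by simp))]
    rw [rowSeq_cons]
    simp only
    rw [ih (fun d hd => h d (by simp [hd]))]

lemma row_key {R : List ℕ} (hR : List.Chain' (· ≤ ·) R) {w w' : List ℕ} (h : KT w w') :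
    (rowSeq R w).1 = (rowSeq R w').1 ∧
      ((rowSeq R w).2 = (rowSeq R w').2 ∨ KTS (rowSeq R w).2 (rowSeq R w').2) := by
  cases h with
  | p1 x y z hxy hyz =>
    induction R with
    | nil =>
      refine ⟨?_, Or.inl ?_⟩ <;>
        simp [rowSeq_cons, rowInsert_cons_le hyz, rowInsert_cons_gt hxy,
          rowInsert_cons_le (le_trans (le_of_lt hxy) hyz),
          rowInsert_cons_gt (lt_of_lt_of_le hxy hyz)]
    | cons a R' ih =>
      have hR' : List.Chain' (· ≤ ·) R' := (List.isChain_cons.mp hR).2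
      rcases le_or_gt a x with ha | ha
      · -- strip the head
        have hw : ∀ c ∈ [y, x, z], a ≤ c := by
          intro c hc; simp at hc; rcases hc with rfl | rfl | rfl <;> omega
        have hw' : ∀ c ∈ [y, z, x], a ≤ c := by
          intro c hc; simp at hc; rcases hc with rfl | rfl | rfl <;> omega
        rw [rowSeq_strip hw, rowSeq_strip hw']
        obtain ⟨e1, e2⟩ := ih hR'
        exact ⟨by simp [e1], by simpa using e2⟩
      · rcases le_or_gt a y with hay | hay
        · -- x < a ≤ y
          simp only [rowSeq_cons, rowSeq_nil, rowInsert_cons_le hay,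
            rowInsert_cons_gt ha, rowInsert_cons_le (le_trans hay hyz),
            rowInsert_cons_le (le_trans (le_of_lt hxy) hyz)]
          simp only [Option.toList_some, Option.toList_none, List.append_nil,
            List.nil_append, List.singleton_append, List.append_assoc]
          refine ⟨by trivial, ?_⟩
          rcases hT : (rowInsert (rowInsert R' y).1 z).2 with _ | c
          · simp
          · rcases hS : (rowInsert R' y).2 with _ | cy
            · -- no bump by y ⇒ no bump by z : contradiction
              exfalso
              have h1 : ∀ b ∈ R', b ≤ y := rowInsert_snd_none_iff.mp hS
              have h2 : (rowInsert R' y).1 = R' ++ [y] := rowInsert_fst_of_none hS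
              have : (rowInsert (rowInsert R' y).1 z).2 = none := by
                rw [rowInsert_snd_none_iff, h2]
                intro b hb
                rcases List.mem_append.mp hb with hb | hb
                · exact le_trans (h1 b hb) hyz
                · simp at hb; omega
              rw [hT] at this; simp at this
            · right; left
              have hy1 : rowInsert R' y = ((rowInsert R' y).1, some cy) := by
                rw [← hS]
              have hz1 : rowInsert (rowInsert R' y).1 z = ((rowInsert (rowInsert R' y).1 z).1, some c) := by
                rw [← hT]
              have hacy : a < cy := lt_of_le_of_lt hay (rowInsert_bump_gt hy1)
              have hcyc : cy ≤ c := bump_mono hR' hyz hy1 hz1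
              simpa using KT.p1 a cy c hacy hcyc
        · rcases le_or_gt a z with haz | haz
          · -- y < a ≤ z
            simp only [rowSeq_cons, rowSeq_nil, rowInsert_cons_gt hay,
              rowInsert_cons_gt (lt_trans hxy hay),
              rowInsert_cons_le hyz, rowInsert_cons_le haz,
              rowInsert_cons_le (le_trans (le_of_lt hxy) hyz),
              rowInsert_cons_gt hxy]
            simp only [Option.toList_some, Option.toList_none, List.append_nil,
              List.nil_append, List.singleton_append, List.append_assoc]
            refine ⟨by trivial, ?_⟩
            rcases hU : (rowInsert R' z).2 with _ | c
            · simp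
            · right; left
              have hz1 : rowInsert R' z = ((rowInsert R' z).1, some c) := by rw [← hU]
              have hac : a ≤ c := le_trans haz (le_of_lt (rowInsert_bump_gt hz1))
              simpa using KT.p1 y a c hay hac
          · -- z < a
            cases R' with
            | nil =>
              refine ⟨?_, Or.inl ?_⟩ <;>
                simp [rowSeq_cons, rowInsert_cons_gt hay, rowInsert_cons_gt hxy,
                  rowInsert_cons_le (le_trans (le_of_lt hxy) hyz),
                  rowInsert_cons_le hyz,
                  rowInsert_cons_gt (lt_of_lt_of_le hxy hyz)]
            | cons r T' =>
              have har : a ≤ r := (List.isChain_cons_cons.mp hR).1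
              have hrz : z < r := lt_of_lt_of_le haz har
              simp only [rowSeq_cons, rowSeq_nil, rowInsert_cons_gt hay,
                rowInsert_cons_gt hxy,
                rowInsert_cons_le (le_trans (le_of_lt hxy) hyz),
                rowInsert_cons_gt hrz, rowInsert_cons_le hyz]
              simp only [Option.toList_some, Option.toList_none, List.append_nil,
                List.nil_append, List.singleton_append, List.append_assoc]
              refine ⟨by trivial, ?_⟩
              right; left
              simpa using KT.p1 y a r hay har
  | p2 x y z hxy hyz =>
    induction R with
    | nil =>
      refine ⟨?_, Or.inl ?_⟩ <;>
        simp [rowSeq_cons, rowInsert_cons_le (le_trans hxy (le_of_lt hyz)),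
          rowInsert_cons_le hxy, rowInsert_cons_gt hyz,
          rowInsert_cons_gt (lt_of_le_of_lt hxy hyz)]
    | cons a R' ih =>
      have hR' : List.Chain' (· ≤ ·) R' := (List.isChain_cons.mp hR).2
      rcases le_or_gt a x with ha | ha
      · have hw : ∀ c ∈ [x, z, y], a ≤ c := by
          intro c hc; simp at hc; rcases hc with rfl | rfl | rfl <;> omega
        have hw' : ∀ c ∈ [z, x, y], a ≤ c := by
          intro c hc; simp at hc; rcases hc with rfl | rfl | rfl <;> omega
        rw [rowSeq_strip hw, rowSeq_strip hw']
        obtain ⟨e1, e2⟩ := ih hR'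
        exact ⟨by simp [e1], by simpa using e2⟩
      · rcases le_or_gt a y with hay | hay
        · -- x < a ≤ y < z
          simp only [rowSeq_cons, rowSeq_nil, rowInsert_cons_gt ha,
            rowInsert_cons_le (le_trans hxy (le_of_lt hyz)),
            rowInsert_cons_le (le_trans hay (le_of_lt hyz)),
            rowInsert_cons_le hxy]
          simp only [Option.toList_some, Option.toList_none, List.append_nil,
            List.nil_append, List.singleton_append, List.append_assoc]
          refine ⟨by trivial, ?_⟩
          rcases hS : (rowInsert R' z).2 with _ | c
          · simp
          · have hz1 : rowInsert R' z = ((rowInsert R' z).1, some c) := by rw [← hS]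
            rcases hV : (rowInsert (rowInsert R' z).1 y).2 with _ | d
            · exfalso
              have hmem : z ∈ (rowInsert R' z).1 := rowInsert_mem_x hz1
              have := rowInsert_snd_none_iff.mp hV z hmem
              omega
            · right; left
              have hy1 : rowInsert (rowInsert R' z).1 y =
                  ((rowInsert (rowInsert R' z).1 y).1, some d) := by rw [← hV]
              have hdc : d < c := bump_anti hR' hyz hz1 hy1
              have had : a ≤ d := le_trans hay (le_of_lt (rowInsert_bump_gt hy1))
              simpa using KT.p2 a d c had hdc
        · rcases le_or_gt a z with haz | haz
          · -- y < a ≤ z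
            cases R' with
            | nil =>
              refine ⟨?_, Or.inl ?_⟩ <;>
                simp [rowSeq_cons, rowInsert_cons_gt ha, rowInsert_cons_le haz,
                  rowInsert_cons_le hxy, rowInsert_cons_gt hyz,
                  rowInsert_cons_le (le_trans hxy (le_of_lt hyz))]
            | cons r T' =>
              have har : a ≤ r := (List.isChain_cons_cons.mp hR).1
              have hry : y < r := lt_of_lt_of_le hay har
              -- S = rowInsert (r::T') z, S.1 = h :: t with y < h, h ≤ z
              rcases le_or_gt r z with hrz | hrz
              · -- h = r
                simp only [rowSeq_cons, rowSeq_nil, rowInsert_cons_gt ha,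
                  rowInsert_cons_le (le_trans hxy (le_of_lt hyz)),
                  rowInsert_cons_le hrz, rowInsert_cons_le haz,
                  rowInsert_cons_le hxy, rowInsert_cons_gt hry]
                simp only [Option.toList_some, Option.toList_none, List.append_nil,
                  List.nil_append, List.singleton_append, List.append_assoc]
                refine ⟨by trivial, ?_⟩
                rcases hS : (rowInsert T' z).2 with _ | c
                · simp
                · right; left
                  have hz1 : rowInsert T' z = ((rowInsert T' z).1, some c) := by rw [← hS]
                  have hrc : r < c := lt_of_le_of_lt hrz (rowInsert_bump_gt hz1)
                  simpa using KT.p2 a r c har hrc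
              · -- h = z, bump r immediately
                simp only [rowSeq_cons, rowSeq_nil, rowInsert_cons_gt ha,
                  rowInsert_cons_le (le_trans hxy (le_of_lt hyz)),
                  rowInsert_cons_gt hrz, rowInsert_cons_le haz,
                  rowInsert_cons_le hxy, rowInsert_cons_gt hyz]
                simp only [Option.toList_some, Option.toList_none, List.append_nil,
                  List.nil_append, List.singleton_append, List.append_assoc]
                refine ⟨by trivial, ?_⟩
                right; left
                simpa using KT.p2 a z r haz hrz
          · -- z < a
            cases R' with
            | nil =>
              refine ⟨?_, Or.inl ?_⟩ <;>
                simp [rowSeq_cons, rowInsert_cons_gt ha, rowInsert_cons_gt haz,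
                  rowInsert_cons_le hxy, rowInsert_cons_gt hyz,
                  rowInsert_cons_le (le_trans hxy (le_of_lt hyz)),
                  rowInsert_cons_gt (lt_of_le_of_lt hxy hyz)]
            | cons r T' =>
              have har : a ≤ r := (List.isChain_cons_cons.mp hR).1
              have hrz : z < r := lt_of_lt_of_le haz har
              simp only [rowSeq_cons, rowSeq_nil, rowInsert_cons_gt ha,
                rowInsert_cons_le (le_trans hxy (le_of_lt hyz)),
                rowInsert_cons_gt hrz, rowInsert_cons_gt haz,
                rowInsert_cons_gt (lt_of_le_of_lt hxy hyz),
                rowInsert_cons_le hxy, rowInsert_cons_gt hyz,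
                rowInsert_cons_gt (lt_of_lt_of_le hay har)]
              simp only [Option.toList_some, Option.toList_none, List.append_nil,
                List.nil_append, List.singleton_append, List.append_assoc]
              refine ⟨by trivial, ?_⟩
              right; right
              simpa using KT.p1 z a r haz har

def RowsChain (T : List (List ℕ)) : Prop := ∀ r ∈ T, List.Chain' (· ≤ ·) r

lemma RowsChain.tabInsert {T : List (List ℕ)} (hT : RowsChain T) (x : ℕ) :
    RowsChain (tabInsert T x) := by
  induction T generalizing x with
  | nil =>
    intro r hr
    simp at hr
    simp [hr]
    exact List.isChain_singleton x
  | cons R rest ih =>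
    rw [tabInsert_cons]
    have hRrest : RowsChain rest := fun r hr => hT r (by simp [hr])
    have hR : List.Chain' (· ≤ ·) R := hT R (by simp)
    rcases hs : (rowInsert R x).2 with _ | b
    · intro r hr
      rcases List.mem_cons.mp hr with hr | hr
      · exact hr ▸ rowInsert_chain hR x
      · exact hRrest r hr
    · intro r hr
      rcases List.mem_cons.mp hr with hr | hr
      · exact hr ▸ rowInsert_chain hR x
      · exact ih hRrest b r hr

lemma RowsChain.rskp (w : List ℕ) : RowsChain (RSKP w) := by
  rw [RSKP]
  induction w using List.reverseRecOn with
  | nil => intro r hr; simp at hr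
  | append_singleton l x ih => rw [List.foldl_append]; exact ih.tabInsert x

lemma tab_key {T : List (List ℕ)} (hT : RowsChain T) {w w' : List ℕ} (h : KTS w w') :
    List.foldl tabInsert T w = List.foldl tabInsert T w' := by
  induction T generalizing w w' with
  | nil =>
    have base : ∀ {a b : List ℕ}, KT a b →
        List.foldl tabInsert [] a = List.foldl tabInsert [] b := by
      intro a b hab
      cases hab with
      | p1 x y z h1 h2 =>
        simp [tabInsert_cons, rowInsert_cons_le h2, rowInsert_cons_gt h1,
          rowInsert_cons_le (le_trans (le_of_lt h1) h2)]
      | p2 x y z h1 h2 =>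
        simp [tabInsert_cons, rowInsert_cons_le h1, rowInsert_cons_gt h2,
          rowInsert_cons_le (le_trans h1 (le_of_lt h2)),
          rowInsert_cons_gt (lt_of_le_of_lt h1 h2)]
    rcases h with h | h
    · exact base h
    · exact (base h).symm
  | cons R rest ih =>
    rw [foldl_tabInsert_cons, foldl_tabInsert_cons]
    have hR : List.Chain' (· ≤ ·) R := hT R (by simp)
    have hrest : RowsChain rest := fun r hr => hT r (by simp [hr])
    have key : (rowSeq R w).1 = (rowSeq R w').1 ∧
        ((rowSeq R w).2 = (rowSeq R w').2 ∨ KTS (rowSeq R w).2 (rowSeq R w').2) := by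
      rcases h with h | h
      · exact row_key hR h
      · obtain ⟨e1, e2⟩ := row_key hR h
        refine ⟨e1.symm, ?_⟩
        rcases e2 with e2 | e2
        · exact Or.inl e2.symm
        · exact Or.inr e2.symm
    obtain ⟨e1, e2⟩ := key
    rw [e1]
    rcases e2 with e2 | e2
    · rw [e2]
    · rw [ih hrest e2]

lemma RSKP_eq_of_KStep {w w' : List ℕ} (h : KStep w w') : RSKP w = RSKP w' := by
  obtain ⟨u, v, a, b, rfl, rfl, hab⟩ := h
  have : RowsChain (RSKP u) := RowsChain.rskp u
  rw [RSKP, RSKP, List.foldl_append, List.foldl_append, List.foldl_append, List.foldl_append]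
  rw [show List.foldl tabInsert [] u = RSKP u from rfl]
  rw [tab_key (RowsChain.rskp u) hab]

lemma RSKP_eq_of_Knuth {w w' : List ℕ} (h : Knuth w w') : RSKP w = RSKP w' := by
  induction h with
  | refl => rfl
  | tail _ h2 ih => rw [ih, RSKP_eq_of_KStep h2]

@[simp] lemma readWord_nil : readWord [] = [] := rfl

lemma readWord_cons (R : List ℕ) (rest : List (List ℕ)) :
    readWord (R :: rest) = readWord rest ++ R := by
  simp [readWord]

/-- Move a small letter leftwards past an increasing run, keeping a guard on the left. -/
lemma knuth_move_left {x a : ℕ} (hxa : x < a) :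
    ∀ L : List ℕ, List.Chain' (· ≤ ·) (a :: L) →
      Knuth (a :: (L ++ [x])) (a :: x :: L) := by
  intro L
  induction L generalizing a with
  | nil => intro _; exact Knuth.refl _
  | cons c L' ih =>
    intro hch
    have hac : a ≤ c := (List.isChain_cons_cons.mp hch).1
    have hxc : x < c := lt_of_lt_of_le hxa hac
    have h1 : Knuth (c :: (L' ++ [x])) (c :: x :: L') :=
      ih hxc (List.isChain_cons_cons.mp hch).2
    have h2 : Knuth (a :: c :: (L' ++ [x])) (a :: c :: x :: L') := by
      simpa using h1.congr_left [a]
    have h3 : KStep (a :: c :: x :: L') (a :: x :: c :: L') := by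
      refine ⟨[], L', [a, c, x], [a, x, c], by simp, by simp, Or.inr ?_⟩
      exact KT.p1 x a c hxa hac
    exact Knuth.trans (by simpa using h2) (Knuth.single h3)

/-- Row bumping at the word level. -/
lemma knuth_row_bump {R R' : List ℕ} {x b : ℕ} (hR : List.Chain' (· ≤ ·) R)
    (h : rowInsert R x = (R', some b)) : Knuth (R ++ [x]) (b :: R') := by
  induction R generalizing R' with
  | nil => simp at h
  | cons a R₀ ih =>
    rcases le_or_gt a x with ha | ha
    · rw [rowInsert_cons_le ha] at h
      rcases hr : rowInsert R₀ x with ⟨S, bo⟩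
      rw [hr] at h
      simp only [Prod.mk.injEq] at h
      cases bo with
      | none => simp at h
      | some b₀ =>
        have hb : b₀ = b := by simpa using h.2
        rw [hb] at hr
        have hR₀ : List.Chain' (· ≤ ·) R₀ := (List.isChain_cons.mp hR).2
        have ih' : Knuth (R₀ ++ [x]) (b :: S) := ih hR₀ hr
        have h1 : Knuth (a :: (R₀ ++ [x])) (a :: b :: S) := by
          simpa using ih'.congr_left [a]
        obtain ⟨hh, t, hSt, hhx⟩ := rowInsert_head_le hr
        have hah : a ≤ hh := by
          have : hh ∈ S := by rw [hSt]; simp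
          rcases rowInsert_mem_fst (by rw [hr]; exact this) with hm | hm
          · exact chain'_le_of_mem hR hm
          · omega
        have hfin : KStep (a :: b :: S) (b :: a :: S) := by
          refine ⟨[], t, [a, b, hh], [b, a, hh], by simp [hSt], by simp [hSt], Or.inl ?_⟩
          exact KT.p2 a hh b hah (lt_of_le_of_lt hhx (rowInsert_bump_gt hr))
        have : Knuth ((a :: R₀) ++ [x]) (b :: a :: S) :=
          Knuth.trans (by simpa using h1) (Knuth.single hfin)
        rw [← h.1]
        exact this
    · rw [rowInsert_cons_gt ha] at h
      simp only [Prod.mk.injEq, Option.some.injEq] at h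
      rw [← h.1, ← h.2]
      exact knuth_move_left ha R₀ hR

lemma knuth_readWord_tabInsert {T : List (List ℕ)} (hT : RowsChain T) (x : ℕ) :
    Knuth (readWord T ++ [x]) (readWord (tabInsert T x)) := by
  induction T generalizing x with
  | nil => simp [readWord_cons]; exact Knuth.refl _
  | cons R rest ih =>
    have hR : List.Chain' (· ≤ ·) R := hT R (by simp)
    have hrest : RowsChain rest := fun r hr => hT r (by simp [hr])
    rw [tabInsert_cons]
    rcases hs : (rowInsert R x).2 with _ | b
    · have : (rowInsert R x).1 = R ++ [x] := rowInsert_fst_of_none hs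
      rw [readWord_cons, readWord_cons, this]
      simpa using Knuth.refl (readWord rest ++ R ++ [x])
    · have hrow : rowInsert R x = ((rowInsert R x).1, some b) := by rw [← hs]
      have h1 : Knuth (R ++ [x]) (b :: (rowInsert R x).1) := knuth_row_bump hR hrow
      have h2 : Knuth (readWord rest ++ (R ++ [x]))
          (readWord rest ++ (b :: (rowInsert R x).1)) := h1.congr_left _
      have h3 : Knuth (readWord rest ++ [b]) (readWord (tabInsert rest b)) := ih hrest b
      have h4 : Knuth ((readWord rest ++ [b]) ++ (rowInsert R x).1)
          (readWord (tabInsert rest b) ++ (rowInsert R x).1) := h3.congr_right _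
      rw [readWord_cons, readWord_cons]
      refine Knuth.trans (by simpa using h2) ?_
      refine Knuth.trans ?_ h4
      simpa using Knuth.refl (readWord rest ++ (b :: (rowInsert R x).1))

lemma knuth_readWord_RSKP (w : List ℕ) : Knuth w (readWord (RSKP w)) := by
  induction w using List.reverseRecOn with
  | nil => exact Knuth.refl _
  | append_singleton l x ih =>
    have h1 : Knuth (l ++ [x]) (readWord (RSKP l) ++ [x]) := ih.congr_right [x]
    have h2 : Knuth (readWord (RSKP l) ++ [x]) (readWord (tabInsert (RSKP l) x)) :=
      knuth_readWord_tabInsert (RowsChain.rskp l) x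
    have : RSKP (l ++ [x]) = tabInsert (RSKP l) x := by
      rw [RSKP, List.foldl_append]; rfl
    rw [this]
    exact Knuth.trans h1 h2

section FilterMap

variable (i j : ℕ)

def gmap (w : List ℕ) : List ℕ :=
  (w.filter (fun v => decide (i ≤ v ∧ v ≤ j))).map (fun v => v - (i - 1))

lemma gmap_append (u v : List ℕ) : gmap i j (u ++ v) = gmap i j u ++ gmap i j v := by
  simp [gmap]

lemma KT_gmap {a b : List ℕ} (h : KT a b) :
    gmap i j a = gmap i j b ∨ KT (gmap i j a) (gmap i j b) := by
  cases h with
  | p1 x y z h1 h2 =>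
    by_cases hx : i ≤ x ∧ x ≤ j
    · by_cases hz : i ≤ z ∧ z ≤ j
      · have hy : i ≤ y ∧ y ≤ j := by omega
        right
        simp only [gmap, List.filter_cons, List.filter_nil,
          decide_eq_true_eq, if_pos hx, if_pos hy, if_pos hz, List.map_cons, List.map_nil]
        exact KT.p1 (x - (i-1)) (y - (i-1)) (z - (i-1)) (by omega) (by omega)
      · -- z outside; if z < i then all outside; if z > j, z dropped
        left
        by_cases hy : i ≤ y ∧ y ≤ j <;>
          simp [gmap, List.filter_cons, hx, hy, hz]
    · left
      by_cases hy : i ≤ y ∧ y ≤ j <;> by_cases hz : i ≤ z ∧ z ≤ j <;>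
        simp [gmap, List.filter_cons, hx, hy, hz]
  | p2 x y z h1 h2 =>
    by_cases hx : i ≤ x ∧ x ≤ j
    · by_cases hz : i ≤ z ∧ z ≤ j
      · have hy : i ≤ y ∧ y ≤ j := by omega
        right
        simp only [gmap, List.filter_cons, List.filter_nil,
          decide_eq_true_eq, if_pos hx, if_pos hy, if_pos hz, List.map_cons, List.map_nil]
        exact KT.p2 (x - (i-1)) (y - (i-1)) (z - (i-1)) (by omega) (by omega)
      · left
        by_cases hy : i ≤ y ∧ y ≤ j <;>
          simp [gmap, List.filter_cons, hx, hy, hz]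
    · left
      by_cases hy : i ≤ y ∧ y ≤ j <;> by_cases hz : i ≤ z ∧ z ≤ j <;>
        simp [gmap, List.filter_cons, hx, hy, hz]

lemma KStep_gmap {w w' : List ℕ} (h : KStep w w') : Knuth (gmap i j w) (gmap i j w') := by
  obtain ⟨u, v, a, b, rfl, rfl, hab⟩ := h
  rw [gmap_append, gmap_append, gmap_append, gmap_append]
  have key : gmap i j a = gmap i j b ∨ KTS (gmap i j a) (gmap i j b) := by
    rcases hab with hab | hab
    · rcases KT_gmap i j hab with h | h
      · exact Or.inl h
      · exact Or.inr (Or.inl h)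
    · rcases KT_gmap i j hab with h | h
      · exact Or.inl h.symm
      · exact Or.inr (Or.inr h)
  rcases key with h | h
  · rw [h]; exact Knuth.refl _
  · exact Knuth.single ⟨gmap i j u, gmap i j v, gmap i j a, gmap i j b, rfl, rfl, h⟩

lemma Knuth_gmap {w w' : List ℕ} (h : Knuth w w') : Knuth (gmap i j w) (gmap i j w') := by
  induction h with
  | refl => exact Knuth.refl _
  | tail _ h2 ih => exact Knuth.trans ih (KStep_gmap i j h2)

end FilterMap

lemma flatten_map_filter (p : ℕ → Bool) (L : List (List ℕ)) :
    (L.map (List.filter p)).flatten = L.flatten.filter p := by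
  induction L with
  | nil => simp
  | cons a L ih =>
    simp only [List.map_cons, List.flatten_cons, List.filter_append, ih]

lemma readWord_restrictTab (T : List (List ℕ)) (i j : ℕ) :
    readWord (restrictTab T i j) = (readWord T).filter (fun v => decide (i ≤ v ∧ v ≤ j)) := by
  simp only [readWord, restrictTab]
  rw [← List.map_reverse, flatten_map_filter]


/-- For `u ∈ Sₙ` and `1 ≤ i ≤ j ≤ n`, the standardization (via jeu de
taquin) of the restriction of the RSK insertion tableau `P(u)` to the values `[i, j]`
equals the insertion tableau of the standardized subword `st(u_{[i,j]})`. -/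
theorem st_restrict_insertion_tableau (n : ℕ) (u : List ℕ) (hu : IsPermWord n u)
    (i j : ℕ) (hi : 1 ≤ i) (hij : i ≤ j) (hj : j ≤ n) :
    stTab (RSKP u) i j =
      RSKP ((u.filter (fun v => decide (i ≤ v ∧ v ≤ j))).map (fun v => v - (i - 1))) := by
  have h1 : Knuth u (readWord (RSKP u)) := knuth_readWord_RSKP u
  have h2 : Knuth (gmap i j u) (gmap i j (readWord (RSKP u))) := Knuth_gmap i j h1
  have h3 : RSKP (gmap i j u) = RSKP (gmap i j (readWord (RSKP u))) := RSKP_eq_of_Knuth h2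
  rw [stTab, readWord_restrictTab]
  exact h3.symm
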